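/- A pre-Hilbert space X has an orthonormal basis if and only if there is a family (X_α)_{α<δ} of separable, pairwise orthogonal sub-inner-product-spaces of X whose union spans a dense subspace of X. -/

import Mathlib

noncomputable section
open scoped InnerProductSpace ENNReal

/-- An orthonormal subset of an inner product space. -/
def OrthSet (k : Type*) {E : Type*} [RCLike k] [NormedAddCommGroup E]
    [InnerProductSpace k E] (B : Set E) : Prop :=
  Orthonormal k ((↑) : B → E)

/-- A maximal orthonormal system of the whole space. -/
def MaximalOrthSet (k : Type*) {E : Type*} [RCLike k] [NormedAddCommGroup E]
    [InnerProductSpace k E] (B : Set E) : Prop :=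
  OrthSet k B ∧ ∀ C : Set E, B ⊆ C → OrthSet k C → C = B

/-- An orthonormal basis (as a set): an orthonormal system whose linear span is dense. -/
def IsOrthBasisSet (k : Type*) {E : Type*} [RCLike k] [NormedAddCommGroup E]
    [InnerProductSpace k E] (B : Set E) : Prop :=
  OrthSet k B ∧ Dense (Submodule.span k B : Set E)

/-- The space has an orthonormal basis (is non-pathological). -/
def HasOrthBasis (k E : Type*) [RCLike k] [NormedAddCommGroup E]
    [InnerProductSpace k E] : Prop :=
  ∃ B : Set E, IsOrthBasisSet k B

/-- Density: least cardinality of a dense subset. -/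
def densityCard (E : Type*) [TopologicalSpace E] : Cardinal :=
  sInf { c | ∃ D : Set E, Dense D ∧ Cardinal.mk D = c }

universe u

open TopologicalSpace Set Submodule InnerProductSpace in
/-- Every separable inner product space has an orthonormal basis set. -/
theorem sep_hasOrthBasis {k F : Type*} [RCLike k] [NormedAddCommGroup F]
    [InnerProductSpace k F] [SeparableSpace F] :
    ∃ B : Set F, Orthonormal k ((↑) : B → F) ∧ Dense (Submodule.span k B : Set F) := by
  cases isEmpty_or_nonempty F with
  | inl h =>
    exact ⟨∅, orthonormal_empty k F, fun x => h.elim x⟩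
  | inr h =>
    obtain ⟨u, hu⟩ := exists_dense_seq F
    set g := gramSchmidtNormed k u with hg
    set s : Set ℕ := {i | g i ≠ 0} with hs
    refine ⟨Set.range (fun i : s => g i), (gramSchmidtNormed_orthonormal' u).toSubtypeRange, ?_⟩
    have hrange : Set.range (fun i : s => g i) = g '' s := Set.image_eq_range g s ▸ rfl
    have hspan : span k (Set.range (fun i : s => g i)) = span k (Set.range u) := by
      rw [hrange]
      have h1 : span k (g '' s) = span k (Set.range g) := by
        apply le_antisymm (span_mono (Set.image_subset_range _ _))
        rw [span_le]
        rintro _ ⟨i, rfl⟩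
        by_cases hi : g i = 0
        · simp [hi]
        · exact subset_span (Set.mem_image_of_mem g hi)
      rw [h1, span_gramSchmidtNormed_range, span_gramSchmidt]
    rw [hspan]
    exact hu.mono subset_span

/-- `X` has an orthonormal basis iff it is the closure of an orthogonal
direct sum of separable sub-inner-product-spaces. -/
theorem stmt13 {k : Type*} [RCLike k] {E : Type u} [NormedAddCommGroup E]
    [InnerProductSpace k E] :
    HasOrthBasis k E ↔
      ∃ (δ : Type u) (X : δ → Submodule k E),
        (∀ α, TopologicalSpace.SeparableSpace (X α)) ∧
        (∀ α β, α ≠ β → ∀ u ∈ X α, ∀ v ∈ X β, (inner k u v : k) = 0) ∧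
        Dense ((⨆ α, X α : Submodule k E) : Set E) := by
  constructor
  · rintro ⟨B, hB, hBd⟩
    refine ⟨B, fun b => k ∙ (b : E), fun b => inferInstance, ?_, ?_⟩
    · rintro α β hαβ u hu v hv
      rw [Submodule.mem_span_singleton] at hu hv
      obtain ⟨c, rfl⟩ := hu
      obtain ⟨d, rfl⟩ := hv
      rw [inner_smul_left, inner_smul_right, hB.2 hαβ, mul_zero, mul_zero]
    · have : (⨆ b : B, k ∙ (b : E)) = Submodule.span k B := by
        rw [Submodule.span_eq_iSup_of_singleton_spans, iSup_subtype]
      rw [this]; exact hBd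
  · rintro ⟨δ, X, hsep, horth, hd⟩
    choose B hBo hBd using fun α => @sep_hasOrthBasis k (X α) _ _ _ (hsep α)
    set C : Set E := ⋃ α, ((↑) '' (B α) : Set E) with hC
    have hCo : OrthSet k C := by
      constructor
      · rintro ⟨x, hx⟩
        obtain ⟨α, y, hy, rfl⟩ := by simpa only [hC, Set.mem_iUnion, Set.mem_image] using hx
        exact (hBo α).1 ⟨y, hy⟩
      · rintro ⟨x, hx⟩ ⟨z, hz⟩ hne
        obtain ⟨α, y, hy, rfl⟩ := by simpa only [hC, Set.mem_iUnion, Set.mem_image] using hx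
        obtain ⟨β, w, hw, rfl⟩ := by simpa only [hC, Set.mem_iUnion, Set.mem_image] using hz
        by_cases hab : α = β
        · subst hab
          have hyw : y ≠ w := fun h => hne (by simp [h])
          have := (hBo α).2 (i := ⟨y, hy⟩) (j := ⟨w, hw⟩) (fun h => hyw (by
            simpa using congrArg Subtype.val h))
          simpa using this
        · exact horth α β hab y y.2 w w.2
    refine ⟨C, hCo, ?_⟩
    rw [Submodule.dense_iff_topologicalClosure_eq_top]
    set T := (Submodule.span k C).topologicalClosure with hT
    have hXT : ∀ α, X α ≤ T := by
      intro α x hx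
      have h0 : (⟨x, hx⟩ : X α) ∈ closure (Submodule.span k (B α) : Set (X α)) := (hBd α) _
      have h1 : (x : E) ∈ closure (Subtype.val '' (Submodule.span k (B α) : Set (X α))) :=
        image_closure_subset_closure_image continuous_subtype_val
          (Set.mem_image_of_mem _ h0)
      have h2 : Subtype.val '' (Submodule.span k (B α) : Set (X α)) ⊆
          (Submodule.span k C : Set E) := by
        have : Submodule.map (X α).subtype (Submodule.span k (B α)) ≤ Submodule.span k C := by
          rw [Submodule.map_span]
          exact Submodule.span_mono (Set.Subset.trans (by exact fun y hy => hy)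
            (Set.subset_iUnion (fun α => (Subtype.val '' B α : Set E)) α))
        exact this
      exact (closure_mono h2 h1 : x ∈ closure (Submodule.span k C : Set E))
    rw [eq_top_iff]
    intro x _
    have hx : x ∈ closure ((⨆ α, X α : Submodule k E) : Set E) := hd x
    have hsub : ((⨆ α, X α : Submodule k E) : Set E) ⊆ (T : Set E) := by
      have : (⨆ α, X α) ≤ T := iSup_le hXT
      exact this
    have : closure ((⨆ α, X α : Submodule k E) : Set E) ⊆ (T : Set E) :=
      closure_minimal hsub (Submodule.isClosed_topologicalClosure _)
    exact this hx
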